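/- For every adt t over Prop there exists an FO sentence φ_t such that for every trace τ, τ satisfies φ_t if and only if τ ∈ ⟦t⟧; moreover φ_t can be chosen of size at most exponential in |t| (there is a constant c, independent of t, with |φ_t| ≤ 2^{c·|t|}). -/

import Mathlib

namespace ADTpaper

/-- Propositional formulas over a set `P` of propositional variables. -/
inductive PropForm (P : Type) : Type where
  | var : P → PropForm P
  | tru : PropForm P
  | fls : PropForm P
  | neg : PropForm P → PropForm P
  | conj : PropForm P → PropForm P → PropForm P
  | disj : PropForm P → PropForm P → PropForm P

/-- A valuation is a subset of `P` (an element of the alphabet `Σ = 2^P`). -/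
abbrev Val (P : Type) : Type := Set P

/-- A trace is a finite word over the alphabet `Σ = 2^P`. -/
abbrev Trace (P : Type) : Type := List (Val P)

/-- Satisfaction of a propositional formula by a valuation. -/
def PropForm.eval {P : Type} (v : Val P) : PropForm P → Prop
  | .var p => p ∈ v
  | .tru => True
  | .fls => False
  | .neg φ => ¬ PropForm.eval v φ
  | .conj φ ψ => PropForm.eval v φ ∧ PropForm.eval v ψ
  | .disj φ ψ => PropForm.eval v φ ∨ PropForm.eval v ψ

/-- Size of a propositional formula. -/
def PropForm.size {P : Type} : PropForm P → ℕ
  | .var _ => 1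
  | .tru => 1
  | .fls => 1
  | .neg φ => PropForm.size φ + 1
  | .conj φ ψ => PropForm.size φ + PropForm.size ψ + 1
  | .disj φ ψ => PropForm.size φ + PropForm.size ψ + 1

/-- Attack-defense trees over `P` (operators taken binary, w.l.o.g. by associativity). -/
inductive ADT (P : Type) : Type where
  | eps  : ADT P
  | leaf : PropForm P → ADT P
  | orA  : ADT P → ADT P → ADT P
  | sand : ADT P → ADT P → ADT P
  | andA : ADT P → ADT P → ADT P
  | cm   : ADT P → ADT P → ADT P

/-- Trace semantics of an adt: a language over the alphabet `Σ = 2^P`. -/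
def sem {P : Type} : ADT P → Language (Val P)
  | .eps => 1
  | .leaf γ => {w | ∃ w' v, w = w' ++ [v] ∧ PropForm.eval v γ}
  | .orA t₁ t₂ => sem t₁ ⊔ sem t₂
  | .sand t₁ t₂ => sem t₁ * sem t₂
  | .andA t₁ t₂ => (sem t₁ * ⊤ ⊓ sem t₂) ⊔ (sem t₂ * ⊤ ⊓ sem t₁)
  | .cm t₁ t₂ => sem t₁ \ sem t₂

/-- Countermeasure-depth of an adt. -/
def cd {P : Type} : ADT P → ℕ
  | .eps => 0
  | .leaf _ => 0
  | .orA t₁ t₂ => max (cd t₁) (cd t₂)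
  | .sand t₁ t₂ => max (cd t₁) (cd t₂)
  | .andA t₁ t₂ => max (cd t₁) (cd t₂)
  | .cm t₁ t₂ => max (cd t₁) (cd t₂ + 1)

/-- The size of an adt: the sum of the sizes of its leaves, the leaf `ε` having size 1. -/
def ADT.size {P : Type} : ADT P → ℕ
  | .eps => 1
  | .leaf γ => PropForm.size γ
  | .orA t₁ t₂ => ADT.size t₁ + ADT.size t₂
  | .sand t₁ t₂ => ADT.size t₁ + ADT.size t₂
  | .andA t₁ t₂ => ADT.size t₁ + ADT.size t₂
  | .cm t₁ t₂ => ADT.size t₁ + ADT.size t₂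


/-- First-order logic on finite words over alphabet `α`: for each letter `a` a unary
predicate `a(x)` ("the letter at position `x` is `a`") and the binary predicate `x < y`
on positions. Variables are indexed by natural numbers. -/
inductive FO (α : Type) : Type where
  | letter : α → ℕ → FO α
  | lt : ℕ → ℕ → FO α
  | neg : FO α → FO α
  | conj : FO α → FO α → FO α
  | disj : FO α → FO α → FO α
  | ex : ℕ → FO α → FO α
  | all : ℕ → FO α → FO α

/-- Satisfaction of an FO formula in a finite word `w`, with assignment `ρ` of the
variables to positions (positions of `w` are `0, …, w.length - 1`). -/
def FO.sat {α : Type} (w : List α) (ρ : ℕ → ℕ) : FO α → Prop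
  | .letter a x => w[ρ x]? = some a
  | .lt x y => ρ x < ρ y
  | .neg φ => ¬ FO.sat w ρ φ
  | .conj φ ψ => FO.sat w ρ φ ∧ FO.sat w ρ ψ
  | .disj φ ψ => FO.sat w ρ φ ∨ FO.sat w ρ ψ
  | .ex x φ => ∃ i, i < w.length ∧ FO.sat w (Function.update ρ x i) φ
  | .all x φ => ∀ i, i < w.length → FO.sat w (Function.update ρ x i) φ

/-- Size of an FO formula (its length as an expression). -/
def FO.size {α : Type} : FO α → ℕ
  | .letter _ _ => 1
  | .lt _ _ => 1
  | .neg φ => FO.size φ + 1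
  | .conj φ ψ => FO.size φ + FO.size ψ + 1
  | .disj φ ψ => FO.size φ + FO.size ψ + 1
  | .ex _ φ => FO.size φ + 1
  | .all _ φ => FO.size φ + 1

/-- `φ` defines the language `L`: a word belongs to `L` iff it satisfies `φ`
(under every assignment; in particular `φ` behaves as a sentence). -/
def FODefines {α : Type} (φ : FO α) (L : Language α) : Prop :=
  ∀ (w : List α) (ρ : ℕ → ℕ), w ∈ L ↔ FO.sat w ρ φ

/-- Quantifier-free FO formulas. -/
inductive QF {α : Type} : FO α → Prop where
  | letter (a : α) (x : ℕ) : QF (FO.letter a x)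
  | lt (x y : ℕ) : QF (FO.lt x y)
  | neg {φ} : QF φ → QF (FO.neg φ)
  | conj {φ ψ} : QF φ → QF ψ → QF (FO.conj φ ψ)
  | disj {φ ψ} : QF φ → QF ψ → QF (FO.disj φ ψ)

mutual
  /-- `SigmaFO ℓ φ`: `φ` has at most `ℓ` alternating blocks of quantifiers,
  starting with a block of `∃`. -/
  inductive SigmaFO {α : Type} : ℕ → FO α → Prop where
    | qf {n : ℕ} {φ : FO α} : QF φ → SigmaFO n φ
    | ofPi {n : ℕ} {φ : FO α} : PiFO n φ → SigmaFO (n + 1) φ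
    | ex {n x : ℕ} {φ : FO α} : SigmaFO (n + 1) φ → SigmaFO (n + 1) (FO.ex x φ)

  /-- `PiFO ℓ φ`: `φ` has at most `ℓ` alternating blocks of quantifiers,
  starting with a block of `∀`. -/
  inductive PiFO {α : Type} : ℕ → FO α → Prop where
    | qf {n : ℕ} {φ : FO α} : QF φ → PiFO n φ
    | ofSigma {n : ℕ} {φ : FO α} : SigmaFO n φ → PiFO (n + 1) φ
    | all {n x : ℕ} {φ : FO α} : PiFO (n + 1) φ → PiFO (n + 1) (FO.all x φ)
end

/-- A language is `Σ_ℓ`-definable if it is defined by some `Σ_ℓ` sentence. -/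
def SigmaDefinable {α : Type} (ℓ : ℕ) (L : Language α) : Prop :=
  ∃ φ : FO α, SigmaFO ℓ φ ∧ FODefines φ L

/-- A language is `Π_ℓ`-definable if it is defined by some `Π_ℓ` sentence. -/
def PiDefinable {α : Type} (ℓ : ℕ) (L : Language α) : Prop :=
  ∃ φ : FO α, PiFO ℓ φ ∧ FODefines φ L


section SegLib


variable {α : Type}

/-- The factor of `w` from position `i` to position `j`, inclusive. -/
def seg (w : List α) (i j : ℕ) : List α := (w.drop i).take (j + 1 - i)

lemma seg_length {w : List α} {i j : ℕ} (hij : i ≤ j) (hj : j < w.length) :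
    (seg w i j).length = j + 1 - i := by
  simp [seg]; omega

lemma seg_ne_nil {w : List α} {i j : ℕ} (hij : i ≤ j) (hj : j < w.length) :
    seg w i j ≠ [] := by
  intro h
  have := seg_length hij hj
  rw [h] at this
  simp at this; omega

lemma seg_take {w : List α} {i j m : ℕ} (hmj : m ≤ j) :
    (seg w i j).take (m + 1 - i) = seg w i m := by
  rw [seg, List.take_take, seg]
  congr 1
  omega

lemma seg_drop {w : List α} {i j m : ℕ} (him : i ≤ m + 1) :
    (seg w i j).drop (m + 1 - i) = seg w (m + 1) j := by
  simp only [seg, List.drop_take, List.drop_drop]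
  rw [show i + (m + 1 - i) = m + 1 by omega, show j + 1 - i - (m + 1 - i) = j + 1 - (m + 1) by omega]

lemma seg_split {w : List α} {i j m : ℕ} (him : i ≤ m) (hmj : m ≤ j) :
    seg w i j = seg w i m ++ seg w (m + 1) j := by
  conv_lhs => rw [← List.take_append_drop (m + 1 - i) (seg w i j)]
  rw [seg_take hmj, seg_drop (by omega)]

lemma seg_last {w : List α} {i j : ℕ} (hij : i ≤ j) (hj : j < w.length) :
    seg w i j = (w.drop i).take (j - i) ++ [w[j]] := by
  have h1 : j + 1 - i = (j - i) + 1 := by omega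
  have h2 : j - i < (w.drop i).length := by simp; omega
  rw [seg, h1, List.take_succ]
  congr 1
  rw [List.getElem?_eq_getElem h2]
  simp [List.getElem_drop]
  congr 1
  omega

lemma seg_full {w : List α} (hw : w ≠ []) : seg w 0 (w.length - 1) = w := by
  have : w.length - 1 + 1 - 0 = w.length := by
    have := List.length_pos_iff.2 hw; omega
  simp [seg, this]

lemma seg_mem_mul {w : List α} {i j : ℕ} (hij : i ≤ j) (hj : j < w.length)
    (L₁ L₂ : Language α) :
    seg w i j ∈ L₁ * L₂ ↔
      ([] ∈ L₁ ∧ seg w i j ∈ L₂) ∨ ([] ∈ L₂ ∧ seg w i j ∈ L₁) ∨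
      ∃ m, i ≤ m ∧ m < j ∧ seg w i m ∈ L₁ ∧ seg w (m + 1) j ∈ L₂ := by
  constructor
  · rw [Language.mem_mul]
    rintro ⟨a, ha, b, hb, hab⟩
    rcases eq_or_ne a [] with rfl | hane
    · have hbs : b = seg w i j := by simpa using hab
      exact Or.inl ⟨ha, hbs ▸ hb⟩
    rcases eq_or_ne b [] with rfl | hbne
    · have has : a = seg w i j := by simpa using hab
      exact Or.inr (Or.inl ⟨hb, has ▸ ha⟩)
    · have h1 := List.length_pos_iff.2 hane
      have h2 := List.length_pos_iff.2 hbne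
      have h3 : a.length + b.length = (seg w i j).length := by rw [← hab]; simp
      rw [seg_length hij hj] at h3
      set m := i + a.length - 1 with hm
      have hmlen : m + 1 - i = a.length := by omega
      have h4 : a = seg w i m := by
        rw [← seg_take (w := w) (i := i) (j := j) (m := m) (by omega), hmlen, ← hab,
          List.take_left]
      have h5 : b = seg w (m + 1) j := by
        rw [← seg_drop (w := w) (i := i) (j := j) (m := m) (by omega), hmlen, ← hab,
          List.drop_left]
      exact Or.inr (Or.inr ⟨m, by omega, by omega, h4 ▸ ha, h5 ▸ hb⟩)
  · rintro (⟨h1, h2⟩ | ⟨h1, h2⟩ | ⟨m, him, hmj, h1, h2⟩)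
    · exact Language.mem_mul.2 ⟨[], h1, seg w i j, h2, by simp⟩
    · exact Language.mem_mul.2 ⟨seg w i j, h2, [], h1, by simp⟩
    · exact Language.mem_mul.2 ⟨seg w i m, h1, seg w (m + 1) j, h2,
        (seg_split him (le_of_lt hmj)).symm⟩

lemma seg_mem_mul_top {w : List α} {i j : ℕ} (hij : i ≤ j) (hj : j < w.length)
    (L : Language α) :
    seg w i j ∈ L * (⊤ : Language α) ↔
      [] ∈ L ∨ ∃ m, i ≤ m ∧ m ≤ j ∧ seg w i m ∈ L := by
  constructor
  · rw [Language.mem_mul]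
    rintro ⟨a, ha, b, -, hab⟩
    rcases eq_or_ne a [] with rfl | hane
    · exact Or.inl ha
    · have h1 := List.length_pos_iff.2 hane
      have h3 : a.length ≤ (seg w i j).length := by rw [← hab]; simp
      rw [seg_length hij hj] at h3
      set m := i + a.length - 1 with hm
      have hmlen : m + 1 - i = a.length := by omega
      have h4 : a = seg w i m := by
        rw [← seg_take (w := w) (i := i) (j := j) (m := m) (by omega), hmlen, ← hab,
          List.take_left]
      exact Or.inr ⟨m, by omega, by omega, h4 ▸ ha⟩
  · rintro (h | ⟨m, him, hmj, h⟩)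
    · exact Language.mem_mul.2 ⟨[], h, seg w i j, trivial, by simp⟩
    · refine Language.mem_mul.2 ⟨seg w i m, h, (seg w i j).drop (m + 1 - i), trivial, ?_⟩
      rw [← seg_take hmj, List.take_append_drop]

end SegLib

section FOLib
open Classical

variable {α : Type}

/-- An always-false formula. -/
def ffls : FO α := FO.lt 0 0

/-- `ρ x ≤ ρ y`. -/
def leqF (x y : ℕ) : FO α := FO.neg (FO.lt y x)

def bigOr (l : List (FO α)) : FO α := l.foldr FO.disj ffls

/-- `ρ v = ρ u + 1` (with `z` a fresh variable, provided `ρ v ≤ |w|`). -/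
def succF (u v z : ℕ) : FO α :=
  FO.conj (FO.lt u v) (FO.neg (FO.ex z (FO.conj (FO.lt u z) (FO.lt z v))))

/-- Some prefix of the factor `[x..y]` (possibly empty, possibly all) belongs to the
language whose relativization is `φ` (with last-position variable `u`), `e` being the
proposition that the empty word belongs to that language. -/
noncomputable def pfxF (e : Prop) (x y u : ℕ) (φ : FO α) : FO α :=
  FO.disj (if e then leqF x y else ffls) (FO.ex u (FO.conj (leqF u y) φ))

lemma mem_supL {L M : Language α} {x : List α} : x ∈ L ⊔ M ↔ x ∈ L ∨ x ∈ M := Iff.rfl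
lemma mem_infL {L M : Language α} {x : List α} : x ∈ L ⊓ M ↔ x ∈ L ∧ x ∈ M := Iff.rfl
lemma mem_diffL {L M : Language α} {x : List α} : x ∈ L \ M ↔ x ∈ L ∧ x ∉ M := Iff.rfl

lemma sat_letter (w : List α) (ρ : ℕ → ℕ) (a : α) (x : ℕ) :
    FO.sat w ρ (FO.letter a x) ↔ w[ρ x]? = some a := Iff.rfl
lemma sat_lt (w : List α) (ρ : ℕ → ℕ) (x y : ℕ) :
    FO.sat w ρ (FO.lt x y : FO α) ↔ ρ x < ρ y := Iff.rfl
lemma sat_neg (w : List α) (ρ : ℕ → ℕ) (φ : FO α) :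
    FO.sat w ρ (FO.neg φ) ↔ ¬ FO.sat w ρ φ := Iff.rfl
lemma sat_conj (w : List α) (ρ : ℕ → ℕ) (φ ψ : FO α) :
    FO.sat w ρ (FO.conj φ ψ) ↔ FO.sat w ρ φ ∧ FO.sat w ρ ψ := Iff.rfl
lemma sat_disj (w : List α) (ρ : ℕ → ℕ) (φ ψ : FO α) :
    FO.sat w ρ (FO.disj φ ψ) ↔ FO.sat w ρ φ ∨ FO.sat w ρ ψ := Iff.rfl
lemma sat_ex (w : List α) (ρ : ℕ → ℕ) (x : ℕ) (φ : FO α) :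
    FO.sat w ρ (FO.ex x φ) ↔
      ∃ i, i < w.length ∧ FO.sat w (Function.update ρ x i) φ := Iff.rfl
lemma sat_all (w : List α) (ρ : ℕ → ℕ) (x : ℕ) (φ : FO α) :
    FO.sat w ρ (FO.all x φ) ↔
      ∀ i, i < w.length → FO.sat w (Function.update ρ x i) φ := Iff.rfl

@[simp] lemma sat_ffls (w : List α) (ρ : ℕ → ℕ) : ¬ FO.sat w ρ (ffls : FO α) := by
  simp [ffls, FO.sat]

@[simp] lemma sat_leqF (w : List α) (ρ : ℕ → ℕ) (x y : ℕ) :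
    FO.sat w ρ (leqF x y : FO α) ↔ ρ x ≤ ρ y := by
  simp only [leqF, FO.sat]
  omega

lemma sat_iteF {w : List α} {ρ : ℕ → ℕ} (e : Prop) (φ : FO α) :
    FO.sat w ρ (if e then φ else ffls) ↔ e ∧ FO.sat w ρ φ := by
  by_cases he : e <;> simp [he]

lemma sat_bigOr (w : List α) (ρ : ℕ → ℕ) (l : List (FO α)) :
    FO.sat w ρ (bigOr l) ↔ ∃ φ ∈ l, FO.sat w ρ φ := by
  induction l with
  | nil => simp [bigOr]
  | cons φ l ih =>
      simp only [bigOr, List.foldr_cons] at *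
      show FO.sat w ρ (FO.disj _ _) ↔ _
      simp only [FO.sat, ih, List.mem_cons]
      constructor
      · rintro (h | ⟨ψ, h1, h2⟩)
        · exact ⟨φ, Or.inl rfl, h⟩
        · exact ⟨ψ, Or.inr h1, h2⟩
      · rintro ⟨ψ, (rfl | h1), h2⟩
        · exact Or.inl h2
        · exact Or.inr ⟨ψ, h1, h2⟩

lemma sat_succF {w : List α} {ρ : ℕ → ℕ} {u v z : ℕ} (hu : u ≠ z) (hv : v ≠ z)
    (hlen : ρ v ≤ w.length) :
    FO.sat w ρ (succF u v z : FO α) ↔ ρ v = ρ u + 1 := by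
  simp only [succF, sat_conj, sat_lt, sat_neg, sat_ex, Function.update_self,
    Function.update_of_ne hu, Function.update_of_ne hv]
  constructor
  · rintro ⟨h1, h2⟩
    by_contra hne
    exact h2 ⟨ρ u + 1, by omega, by omega, by omega⟩
  · intro h
    refine ⟨by omega, ?_⟩
    rintro ⟨i, hi, h3, h4⟩
    omega

end FOLib

section Translation
open Classical

variable {P : Type} [Fintype P]

/-- The relativized translation: `toFO t x y` says that the factor of the word from
position `x` to position `y` (inclusive; in particular `ρ x ≤ ρ y`) belongs to `sem t`. -/
noncomputable def toFO : ADT P → ℕ → ℕ → FO (Val P)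
  | .eps, _x, _y => ffls
  | .leaf γ, x, y => FO.conj (leqF x y)
      (bigOr ((Finset.univ : Finset (Val P)).toList.map
        (fun v => if PropForm.eval v γ then FO.letter v y else ffls)))
  | .orA t₁ t₂, x, y => FO.disj (toFO t₁ x y) (toFO t₂ x y)
  | .cm t₁ t₂, x, y => FO.conj (toFO t₁ x y) (FO.neg (toFO t₂ x y))
  | .sand t₁ t₂, x, y =>
      FO.disj (FO.disj (if [] ∈ sem t₁ then toFO t₂ x y else ffls)
                       (if [] ∈ sem t₂ then toFO t₁ x y else ffls))
        (FO.ex (max x y + 1) (FO.ex (max x y + 2)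
          (FO.conj (succF (max x y + 1) (max x y + 2) (max x y + 3))
            (FO.conj (toFO t₁ x (max x y + 1)) (toFO t₂ (max x y + 2) y)))))
  | .andA t₁ t₂, x, y =>
      FO.disj
        (FO.conj (pfxF ([] ∈ sem t₁) x y (max x y + 1) (toFO t₁ x (max x y + 1)))
                 (toFO t₂ x y))
        (FO.conj (pfxF ([] ∈ sem t₂) x y (max x y + 1) (toFO t₂ x (max x y + 1)))
                 (toFO t₁ x y))

lemma sat_pfxF {w : List (Val P)} {ρ : ℕ → ℕ} {L : Language (Val P)} {x y u : ℕ}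
    {φ : FO (Val P)} (hyu : y ≠ u) (hy : ρ y < w.length)
    (hφ : ∀ i, i < w.length →
      (FO.sat w (Function.update ρ u i) φ ↔ ρ x ≤ i ∧ seg w (ρ x) i ∈ L)) :
    FO.sat w ρ (pfxF ([] ∈ L) x y u φ) ↔
      ρ x ≤ ρ y ∧ seg w (ρ x) (ρ y) ∈ L * (⊤ : Language (Val P)) := by
  simp only [pfxF, sat_disj, sat_ex, sat_conj]
  constructor
  · rintro (h | ⟨i, hi, hle, hsat⟩)
    · rw [sat_iteF] at h
      obtain ⟨he, h⟩ := h
      rw [sat_leqF] at h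
      exact ⟨h, (seg_mem_mul_top h hy L).2 (Or.inl he)⟩
    · rw [sat_leqF, Function.update_self, Function.update_of_ne hyu] at hle
      rw [hφ i hi] at hsat
      obtain ⟨hxi, hm⟩ := hsat
      have hxy : ρ x ≤ ρ y := le_trans hxi hle
      exact ⟨hxy, (seg_mem_mul_top hxy hy L).2 (Or.inr ⟨i, hxi, hle, hm⟩)⟩
  · rintro ⟨hxy, hm⟩
    rcases (seg_mem_mul_top hxy hy L).1 hm with he | ⟨m, him, hmy, hm'⟩
    · left
      rw [sat_iteF, sat_leqF]
      exact ⟨he, hxy⟩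
    · right
      refine ⟨m, by omega, ?_, ?_⟩
      · rw [sat_leqF, Function.update_self, Function.update_of_ne hyu]
        exact hmy
      · rw [hφ m (by omega)]
        exact ⟨him, hm'⟩

theorem sat_toFO (t : ADT P) :
    ∀ (x y : ℕ) (w : Trace P) (ρ : ℕ → ℕ), ρ x < w.length → ρ y < w.length →
      (FO.sat w ρ (toFO t x y) ↔ ρ x ≤ ρ y ∧ seg w (ρ x) (ρ y) ∈ sem t) := by
  induction t with
  | eps =>
      intro x y w ρ hx hy
      simp only [toFO, sem]
      constructor
      · intro h
        exact absurd h (sat_ffls w ρ)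
      · rintro ⟨hle, hm⟩
        exact absurd (Language.mem_one _ |>.1 hm) (seg_ne_nil hle hy)
  | leaf γ =>
      intro x y w ρ hx hy
      simp only [toFO, sat_conj, sat_leqF, sat_bigOr, List.mem_map, sem, Set.mem_setOf_eq]
      constructor
      · rintro ⟨hle, φ, ⟨v, hv, rfl⟩, hsat⟩
        rw [sat_iteF] at hsat
        obtain ⟨he, hsat⟩ := hsat
        have hvw : v = w[ρ y] := by
          rw [sat_letter, List.getElem?_eq_getElem hy, Option.some_inj] at hsat
          exact hsat.symm
        exact ⟨hle, (w.drop (ρ x)).take (ρ y - ρ x), w[ρ y], seg_last hle hy, hvw ▸ he⟩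
      · rintro ⟨hle, w', v, hseg, he⟩
        have hvw : v = w[ρ y] := by
          have := hseg.symm.trans (seg_last hle hy)
          have h2 := (List.append_inj' this (by simp)).2
          simpa using h2
        refine ⟨hle, _, ⟨w[ρ y], by simp, rfl⟩, ?_⟩
        rw [sat_iteF]
        exact ⟨hvw ▸ he, by rw [sat_letter, List.getElem?_eq_getElem hy]⟩
  | orA t₁ t₂ ih₁ ih₂ =>
      intro x y w ρ hx hy
      simp only [toFO, sat_disj, ih₁ x y w ρ hx hy, ih₂ x y w ρ hx hy, sem, mem_supL]
      tauto
  | cm t₁ t₂ ih₁ ih₂ =>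
      intro x y w ρ hx hy
      simp only [toFO, sat_conj, sat_neg, ih₁ x y w ρ hx hy, ih₂ x y w ρ hx hy, sem, mem_diffL]
      tauto
  | sand t₁ t₂ ih₁ ih₂ =>
      intro x y w ρ hx hy
      simp only [toFO, sat_disj, sat_ex, sat_conj, sem]
      constructor
      · rintro ((h | h) | ⟨i, hi, k, hk, hs, h₁, h₂⟩)
        · rw [sat_iteF] at h
          obtain ⟨he, h⟩ := h
          rw [ih₂ x y w ρ hx hy] at h
          exact ⟨h.1, (seg_mem_mul h.1 hy _ _).2 (Or.inl ⟨he, h.2⟩)⟩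
        · rw [sat_iteF] at h
          obtain ⟨he, h⟩ := h
          rw [ih₁ x y w ρ hx hy] at h
          exact ⟨h.1, (seg_mem_mul h.1 hy _ _).2 (Or.inr (Or.inl ⟨he, h.2⟩))⟩
        · set ρ' := Function.update (Function.update ρ (max x y + 1) i) (max x y + 2) k
            with hρ'
          have e1 : ρ' x = ρ x := by
            rw [hρ', Function.update_of_ne (by omega), Function.update_of_ne (by omega)]
          have e2 : ρ' y = ρ y := by
            rw [hρ', Function.update_of_ne (by omega), Function.update_of_ne (by omega)]
          have e3 : ρ' (max x y + 1) = i := by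
            rw [hρ', Function.update_of_ne (by omega), Function.update_self]
          have e4 : ρ' (max x y + 2) = k := by
            rw [hρ', Function.update_self]
          rw [sat_succF (by omega) (by omega) (by rw [e4]; omega)] at hs
          rw [e3, e4] at hs
          rw [ih₁ x (max x y + 1) w ρ' (by rw [e1]; exact hx) (by rw [e3]; exact hi),
            e1, e3] at h₁
          rw [ih₂ (max x y + 2) y w ρ' (by rw [e4]; exact hk) (by rw [e2]; exact hy),
            e4, e2] at h₂
          have hxy : ρ x ≤ ρ y := by omega
          refine ⟨hxy, (seg_mem_mul hxy hy _ _).2 (Or.inr (Or.inr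
            ⟨i, h₁.1, by omega, h₁.2, ?_⟩))⟩
          have : k = i + 1 := hs
          rw [← this]
          exact h₂.2
      · rintro ⟨hxy, hm⟩
        rcases (seg_mem_mul hxy hy _ _).1 hm with ⟨he, hm'⟩ | ⟨he, hm'⟩ |
          ⟨m, him, hmj, hm₁, hm₂⟩
        · left; left
          rw [sat_iteF]
          exact ⟨he, (ih₂ x y w ρ hx hy).2 ⟨hxy, hm'⟩⟩
        · left; right
          rw [sat_iteF]
          exact ⟨he, (ih₁ x y w ρ hx hy).2 ⟨hxy, hm'⟩⟩
        · right
          refine ⟨m, by omega, m + 1, by omega, ?_⟩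
          set ρ' := Function.update (Function.update ρ (max x y + 1) m)
            (max x y + 2) (m + 1) with hρ'
          have e1 : ρ' x = ρ x := by
            rw [hρ', Function.update_of_ne (by omega), Function.update_of_ne (by omega)]
          have e2 : ρ' y = ρ y := by
            rw [hρ', Function.update_of_ne (by omega), Function.update_of_ne (by omega)]
          have e3 : ρ' (max x y + 1) = m := by
            rw [hρ', Function.update_of_ne (by omega), Function.update_self]
          have e4 : ρ' (max x y + 2) = m + 1 := by
            rw [hρ', Function.update_self]
          refine ⟨?_, ?_, ?_⟩
          · rw [sat_succF (by omega) (by omega) (by rw [e4]; omega), e3, e4]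
          · rw [ih₁ x (max x y + 1) w ρ' (by rw [e1]; exact hx) (by rw [e3]; omega),
              e1, e3]
            exact ⟨him, hm₁⟩
          · rw [ih₂ (max x y + 2) y w ρ' (by rw [e4]; omega) (by rw [e2]; exact hy),
              e4, e2]
            exact ⟨by omega, hm₂⟩
  | andA t₁ t₂ ih₁ ih₂ =>
      intro x y w ρ hx hy
      have hp₁ : FO.sat w ρ (pfxF ([] ∈ sem t₁) x y (max x y + 1)
          (toFO t₁ x (max x y + 1))) ↔
          ρ x ≤ ρ y ∧ seg w (ρ x) (ρ y) ∈ sem t₁ * (⊤ : Language (Val P)) := by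
        refine sat_pfxF (by omega) hy ?_
        intro i hi
        rw [ih₁ x (max x y + 1) w _ (by rw [Function.update_of_ne (by omega)]; exact hx)
          (by rw [Function.update_self]; exact hi), Function.update_of_ne (by omega),
          Function.update_self]
      have hp₂ : FO.sat w ρ (pfxF ([] ∈ sem t₂) x y (max x y + 1)
          (toFO t₂ x (max x y + 1))) ↔
          ρ x ≤ ρ y ∧ seg w (ρ x) (ρ y) ∈ sem t₂ * (⊤ : Language (Val P)) := by
        refine sat_pfxF (by omega) hy ?_
        intro i hi
        rw [ih₂ x (max x y + 1) w _ (by rw [Function.update_of_ne (by omega)]; exact hx)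
          (by rw [Function.update_self]; exact hi), Function.update_of_ne (by omega),
          Function.update_self]
      simp only [toFO, sat_disj, sat_conj, hp₁, hp₂, ih₁ x y w ρ hx hy, ih₂ x y w ρ hx hy, sem, mem_supL, mem_infL]
      tauto

end Translation


section TopLevel
open Classical

variable {α : Type} {P : Type} [Fintype P]

/-- `ρ u` is the first position. -/
def fstF (u z : ℕ) : FO α := FO.neg (FO.ex z (FO.lt z u))

/-- `ρ v` is the last position. -/
def lstF (v z : ℕ) : FO α := FO.neg (FO.ex z (FO.lt v z))

lemma sat_fstF {w : List α} {ρ : ℕ → ℕ} {u z : ℕ} (hu : u ≠ z) :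
    FO.sat w ρ (fstF u z : FO α) ↔ ¬ ∃ i, i < w.length ∧ i < ρ u := by
  simp only [fstF, sat_neg, sat_ex, sat_lt, Function.update_self, Function.update_of_ne hu]

lemma sat_lstF {w : List α} {ρ : ℕ → ℕ} {v z : ℕ} (hv : v ≠ z) :
    FO.sat w ρ (lstF v z : FO α) ↔ ¬ ∃ i, i < w.length ∧ ρ v < i := by
  simp only [lstF, sat_neg, sat_ex, sat_lt, Function.update_self, Function.update_of_ne hv]

/-- The sentence expressing membership in `sem t`. -/
noncomputable def topFO (t : ADT P) : FO (Val P) :=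
  FO.disj (if [] ∈ sem t then FO.neg (FO.ex 0 (FO.neg ffls)) else ffls)
    (FO.ex 0 (FO.ex 1 (FO.conj (fstF 0 2) (FO.conj (lstF 1 2) (toFO t 0 1)))))

theorem topFO_defines (t : ADT P) : FODefines (topFO t) (sem t) := by
  intro w ρ
  simp only [topFO, sat_disj, sat_ex, sat_conj]
  constructor
  · intro hw
    rcases eq_or_ne w [] with rfl | hne
    · left
      rw [sat_iteF]
      refine ⟨hw, ?_⟩
      rw [sat_neg, sat_ex]
      rintro ⟨i, hi, -⟩
      simp at hi
    · right
      have hlen : 0 < w.length := List.length_pos_iff.2 hne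
      set ρ' := Function.update (Function.update ρ 0 0) 1 (w.length - 1) with hρ'
      have e0 : ρ' 0 = 0 := by
        rw [hρ', Function.update_of_ne (by omega), Function.update_self]
      have e1 : ρ' 1 = w.length - 1 := by rw [hρ', Function.update_self]
      refine ⟨0, hlen, w.length - 1, by omega, ?_, ?_, ?_⟩
      · rw [sat_fstF (by omega)]
        rintro ⟨i, hi, hlt⟩
        rw [← hρ', e0] at hlt
        omega
      · rw [sat_lstF (by omega)]
        rintro ⟨i, hi, hlt⟩
        rw [← hρ', e1] at hlt
        omega
      · rw [sat_toFO t 0 1 w ρ' (by rw [e0]; omega) (by rw [e1]; omega), e0, e1,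
          seg_full hne]
        exact ⟨by omega, hw⟩
  · rintro (h | ⟨i, hi, k, hk, hfst, hlst, hsat⟩)
    · rw [sat_iteF] at h
      obtain ⟨he, h⟩ := h
      have hwn : w = [] := by
        by_contra hne
        rw [sat_neg, sat_ex] at h
        exact h ⟨0, List.length_pos_iff.2 hne, fun c => sat_ffls _ _ c⟩
      rw [hwn]
      exact he
    · have hne : w ≠ [] := by
        intro h
        rw [h] at hi
        simp at hi
      set ρ' := Function.update (Function.update ρ 0 i) 1 k with hρ'
      have e0 : ρ' 0 = i := by
        rw [hρ', Function.update_of_ne (by omega), Function.update_self]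
      have e1 : ρ' 1 = k := by rw [hρ', Function.update_self]
      have hi0 : i = 0 := by
        by_contra h0
        rw [sat_fstF (by omega)] at hfst
        exact hfst ⟨0, by omega, by rw [e0]; omega⟩
      have hk0 : k = w.length - 1 := by
        by_contra h0
        rw [sat_lstF (by omega)] at hlst
        exact hlst ⟨k + 1, by omega, by rw [e1]; omega⟩
      rw [sat_toFO t 0 1 w ρ' (by rw [e0]; exact hi) (by rw [e1]; exact hk), e0, e1,
        hi0, hk0, seg_full hne] at hsat
      exact hsat.2

end TopLevel

section SizeBounds
open Classical

variable {α : Type} {P : Type} [Fintype P]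

lemma fo_size_pos (φ : FO α) : 1 ≤ FO.size φ := by
  cases φ <;> simp [FO.size]

lemma propform_size_pos (γ : PropForm P) : 1 ≤ PropForm.size γ := by
  cases γ <;> simp [PropForm.size]

lemma adt_size_pos (t : ADT P) : 1 ≤ ADT.size t := by
  induction t with
  | eps => simp [ADT.size]
  | leaf γ => exact propform_size_pos γ
  | orA t₁ t₂ ih₁ ih₂ => simp only [ADT.size]; omega
  | sand t₁ t₂ ih₁ ih₂ => simp only [ADT.size]; omega
  | andA t₁ t₂ ih₁ ih₂ => simp only [ADT.size]; omega
  | cm t₁ t₂ ih₁ ih₂ => simp only [ADT.size]; omega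

lemma size_iteF (e : Prop) (φ : FO α) : FO.size (if e then φ else ffls) ≤ FO.size φ := by
  by_cases he : e
  · simp [he]
  · simpa [he, ffls, FO.size] using fo_size_pos φ

lemma size_bigOr (l : List (FO α)) (h : ∀ φ ∈ l, FO.size φ = 1) :
    FO.size (bigOr l) ≤ 2 * l.length + 1 := by
  induction l with
  | nil => simp [bigOr, ffls, FO.size]
  | cons φ l ih =>
      have h1 : FO.size φ = 1 := h φ (by simp)
      have h2 := ih (fun ψ hψ => h ψ (by simp [hψ]))
      simp only [bigOr] at h2
      show FO.size (FO.disj _ _) ≤ _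
      simp only [FO.size, h1, List.length_cons]
      omega

lemma size_pfxF (e : Prop) (x y u : ℕ) (φ : FO α) :
    FO.size (pfxF e x y u φ) ≤ FO.size φ + 7 := by
  have h := size_iteF e (leqF x y : FO α)
  simp only [pfxF, FO.size, leqF] at h ⊢
  omega

lemma pow_helper {B a b s₁ s₂ c : ℕ} (hB : 200 ≤ B) (ha : 1 ≤ a) (hb : 1 ≤ b)
    (h₁ : s₁ ≤ B ^ a) (h₂ : s₂ ≤ B ^ b) (hc : c ≤ 60) :
    2 * s₁ + 2 * s₂ + c ≤ B ^ (a + b) := by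
  have e1 : B ^ (a + b) = B ^ a * B ^ b := pow_add B a b
  have h3 : 1 ≤ B ^ a := Nat.one_le_pow _ _ (by omega)
  have h4 : 1 ≤ B ^ b := Nat.one_le_pow _ _ (by omega)
  have h5 : B ^ a * 200 ≤ B ^ a * B ^ b :=
    Nat.mul_le_mul_left _ (le_trans hB (Nat.le_self_pow (by omega) B))
  have h6 : 200 * B ^ b ≤ B ^ a * B ^ b :=
    Nat.mul_le_mul_right _ (le_trans hB (Nat.le_self_pow (by omega) B))
  rw [e1]
  omega

lemma size_toFO (t : ADT P) :
    ∀ x y : ℕ, FO.size (toFO t x y) ≤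
      (2 * Fintype.card (Val P) + 200) ^ ADT.size t := by
  set B := 2 * Fintype.card (Val P) + 200 with hB
  have hB200 : 200 ≤ B := by omega
  induction t with
  | eps =>
      intro x y
      simp only [toFO, ffls, FO.size, ADT.size]
      calc 1 ≤ B := by omega
      _ = B ^ 1 := (pow_one B).symm
  | leaf γ =>
      intro x y
      have hlen : ((Finset.univ : Finset (Val P)).toList.map
          (fun v => if PropForm.eval v γ then FO.letter v y else ffls)).length =
          Fintype.card (Val P) := by
        simp [Finset.length_toList]
      have hone : ∀ φ ∈ ((Finset.univ : Finset (Val P)).toList.map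
          (fun v => if PropForm.eval v γ then FO.letter v y else ffls)), FO.size φ = 1 := by
        rintro φ hφ
        rw [List.mem_map] at hφ
        obtain ⟨v, -, rfl⟩ := hφ
        by_cases h : PropForm.eval v γ <;> simp [h, FO.size, ffls]
      have hbig := size_bigOr _ hone
      rw [hlen] at hbig
      have h1 : FO.size (toFO (ADT.leaf γ) x y) ≤ 2 * Fintype.card (Val P) + 4 := by
        simp only [toFO, FO.size, leqF]
        omega
      calc FO.size (toFO (ADT.leaf γ) x y) ≤ 2 * Fintype.card (Val P) + 4 := h1
      _ ≤ B := by omega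
      _ ≤ B ^ ADT.size (ADT.leaf γ) := Nat.le_self_pow (by
            have := propform_size_pos γ
            simp only [ADT.size]
            omega) B
  | orA t₁ t₂ ih₁ ih₂ =>
      intro x y
      have h₁ := ih₁ x y
      have h₂ := ih₂ x y
      have key := pow_helper (c := 1) hB200 (adt_size_pos t₁) (adt_size_pos t₂) h₁ h₂
        (by omega)
      simp only [toFO, FO.size, ADT.size]
      omega
  | cm t₁ t₂ ih₁ ih₂ =>
      intro x y
      have h₁ := ih₁ x y
      have h₂ := ih₂ x y
      have key := pow_helper (c := 2) hB200 (adt_size_pos t₁) (adt_size_pos t₂) h₁ h₂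
        (by omega)
      simp only [toFO, FO.size, ADT.size]
      omega
  | sand t₁ t₂ ih₁ ih₂ =>
      intro x y
      have h₁ := ih₁ x y
      have h₂ := ih₂ x y
      have h₁' := ih₁ x (max x y + 1)
      have h₂' := ih₂ (max x y + 2) y
      have hi₁ := size_iteF ([] ∈ sem t₁) (toFO t₂ x y)
      have hi₂ := size_iteF ([] ∈ sem t₂) (toFO t₁ x y)
      have key := pow_helper (c := 13) hB200 (adt_size_pos t₁) (adt_size_pos t₂)
        (le_refl (B ^ ADT.size t₁)) (le_refl (B ^ ADT.size t₂)) (by omega)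
      simp only [toFO, FO.size, ADT.size, succF]
      omega
  | andA t₁ t₂ ih₁ ih₂ =>
      intro x y
      have h₁ := ih₁ x y
      have h₂ := ih₂ x y
      have h₁' := ih₁ x (max x y + 1)
      have h₂' := ih₂ x (max x y + 1)
      have hp₁ := size_pfxF ([] ∈ sem t₁) x y (max x y + 1) (toFO t₁ x (max x y + 1))
      have hp₂ := size_pfxF ([] ∈ sem t₂) x y (max x y + 1) (toFO t₂ x (max x y + 1))
      have key := pow_helper (c := 17) hB200 (adt_size_pos t₁) (adt_size_pos t₂)
        (le_refl (B ^ ADT.size t₁)) (le_refl (B ^ ADT.size t₂)) (by omega)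
      have hleq : FO.size (leqF x y : FO (Val P)) = 2 := rfl
      have hk₁ := le_trans (size_iteF ([] ∈ sem t₁) (leqF x y : FO (Val P))) hleq.le
      have hk₂ := le_trans (size_iteF ([] ∈ sem t₂) (leqF x y : FO (Val P))) hleq.le
      simp only [toFO, FO.size, ADT.size]
      omega

lemma size_topFO (t : ADT P) :
    FO.size (topFO t) ≤ (2 * Fintype.card (Val P) + 200) ^ ADT.size t + 15 := by
  have h := size_toFO t 0 1
  have hi := size_iteF ([] ∈ sem t)
    (FO.neg (FO.ex 0 (FO.neg ffls)) : FO (Val P))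
  simp only [topFO, FO.size, fstF, lstF, ffls] at hi ⊢
  omega

end SizeBounds

/-- Every adt `t` translates into an equivalent FO sentence `φ_t`, of size at most
exponential in the size of `t` (with a constant `c` independent of `t`). -/
theorem adt_to_FO {P : Type} [Fintype P] :
    ∃ c : ℕ, ∀ t : ADT P, ∃ φ : FO (Val P),
      FODefines φ (sem t) ∧ FO.size φ ≤ 2 ^ (c * ADT.size t) := by
  classical
  refine ⟨4 * Fintype.card (Val P) + 400, fun t => ⟨topFO t, topFO_defines t, ?_⟩⟩
  set B := 2 * Fintype.card (Val P) + 200 with hB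
  have hs := adt_size_pos t
  have h1 := size_topFO t
  have h15 : 15 ≤ B ^ ADT.size t :=
    le_trans (by omega) (Nat.le_self_pow (by omega) B)
  have h3 : 2 * B ^ ADT.size t ≤ B ^ (ADT.size t + 1) := by
    calc 2 * B ^ ADT.size t = B ^ ADT.size t * 2 := mul_comm _ _
    _ ≤ B ^ ADT.size t * B := Nat.mul_le_mul_left _ (by omega)
    _ = B ^ (ADT.size t + 1) := (pow_succ B (ADT.size t)).symm
  have h4 : B ^ (ADT.size t + 1) ≤ (2 ^ B) ^ (ADT.size t + 1) :=
    Nat.pow_le_pow_left (le_of_lt (Nat.lt_two_pow_self (n := B))) _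
  have h5 : (2 ^ B) ^ (ADT.size t + 1) = 2 ^ (B * (ADT.size t + 1)) :=
    (pow_mul 2 B (ADT.size t + 1)).symm
  have h6 : 2 ^ (B * (ADT.size t + 1)) ≤ 2 ^ (2 * B * ADT.size t) := by
    apply Nat.pow_le_pow_right (by omega)
    calc B * (ADT.size t + 1) ≤ B * (2 * ADT.size t) := Nat.mul_le_mul_left _ (by omega)
    _ = 2 * B * ADT.size t := by ring
  have hce : (4 * Fintype.card (Val P) + 400) * ADT.size t = 2 * B * ADT.size t := by
    rw [hB]; ring
  calc FO.size (topFO t) ≤ B ^ ADT.size t + 15 := h1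
  _ ≤ 2 * B ^ ADT.size t := by omega
  _ ≤ B ^ (ADT.size t + 1) := h3
  _ ≤ (2 ^ B) ^ (ADT.size t + 1) := h4
  _ = 2 ^ (B * (ADT.size t + 1)) := h5
  _ ≤ 2 ^ (2 * B * ADT.size t) := h6
  _ = 2 ^ ((4 * Fintype.card (Val P) + 400) * ADT.size t) := by rw [hce]


end ADTpaper
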